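/- If G is a nontrivial uniquely C4+-saturated graph (G is C4+-free and adding any non-edge creates exactly one copy of C4+, and G has at least 4 vertices), then G is connected and has diameter exactly 2. -/

import Mathlib

open SimpleGraph

/-- The diamond graph `C₄⁺`: a `4`-cycle with one chord, i.e. `K₄` minus an edge. -/
def diamond : SimpleGraph (Fin 4) := (⊤ : SimpleGraph (Fin 4)).deleteEdges {s(0, 1)}

/-- `G'` is a copy of `H` in `G`, i.e. a subgraph of `G` isomorphic to `H`. -/
def IsCopy {W V : Type*} (H : SimpleGraph W) {G : SimpleGraph V} (G' : G.Subgraph) : Prop :=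
  Nonempty (G'.coe ≃g H)

/-- `G` is uniquely `H`-saturated: `G` is `H`-free, and adding any non-edge
creates exactly one copy of `H`. -/
def UniquelySaturated {W V : Type*} (H : SimpleGraph W) (G : SimpleGraph V) : Prop :=
  (∀ G' : G.Subgraph, ¬ IsCopy H G') ∧
    ∀ u v : V, u ≠ v → ¬ G.Adj u v →
      ∃! G' : (G ⊔ SimpleGraph.fromEdgeSet {s(u, v)}).Subgraph, IsCopy H G'

lemma diamond_tri : ∀ a b : Fin 4, diamond.Adj a b →
    ∃ c, diamond.Adj a c ∧ diamond.Adj b c := by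
  simp only [diamond, deleteEdges_adj, top_adj, Set.mem_singleton_iff]
  decide

/-- Every non-adjacent pair of distinct vertices has a common neighbor. -/
lemma common_nbr {V : Type*} (G : SimpleGraph V) (hsat : UniquelySaturated diamond G)
    {u v : V} (hne : u ≠ v) (hnadj : ¬ G.Adj u v) :
    ∃ w, G.Adj u w ∧ G.Adj v w := by
  obtain ⟨G', ⟨e⟩, -⟩ := hsat.2 u v hne hnadj
  by_cases huv : G'.Adj u v
  · have hu : u ∈ G'.verts := G'.edge_vert huv
    have hv : v ∈ G'.verts := G'.edge_vert huv.symm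
    have hab : diamond.Adj (e ⟨u, hu⟩) (e ⟨v, hv⟩) := e.map_adj_iff.mpr huv
    obtain ⟨c, hac, hbc⟩ := diamond_tri _ _ hab
    set w' : G'.verts := e.symm c with hw'
    have hec : e w' = c := by simp [hw']
    have hadj_uw' : G'.coe.Adj ⟨u, hu⟩ w' := e.map_adj_iff.mp (hec ▸ hac)
    have hadj_vw' : G'.coe.Adj ⟨v, hv⟩ w' := e.map_adj_iff.mp (hec ▸ hbc)
    have hadj_uw : G'.Adj u w'.val := (Subgraph.coe_adj ..).mp hadj_uw'
    have hadj_vw : G'.Adj v w'.val := (Subgraph.coe_adj ..).mp hadj_vw'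
    refine ⟨w'.val, ?_, ?_⟩
    · rcases G'.adj_sub hadj_uw with h | h
      · exact h
      · exfalso
        rw [fromEdgeSet_adj, Set.mem_singleton_iff, Sym2.eq, Sym2.rel_iff'] at h
        rcases h.1 with h1 | h1
        · have hwv : w'.val = v := congrArg Prod.snd h1
          have hce : c = e ⟨v, hv⟩ := by rw [← hec]; exact congrArg e (Subtype.ext hwv)
          exact diamond.irrefl (hce ▸ hbc)
        · exact hne (congrArg Prod.fst h1)
    · rcases G'.adj_sub hadj_vw with h | h
      · exact h
      · exfalso
        rw [fromEdgeSet_adj, Set.mem_singleton_iff, Sym2.eq, Sym2.rel_iff'] at h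
        rcases h.1 with h1 | h1
        · exact hne (congrArg Prod.fst h1).symm
        · have hwu : w'.val = u := congrArg Prod.snd h1
          have hce : c = e ⟨u, hu⟩ := by rw [← hec]; exact congrArg e (Subtype.ext hwu)
          exact diamond.irrefl (hce ▸ hac)
  · exfalso
    have hsub : ∀ a b, G'.Adj a b → G.Adj a b := by
      intro a b hab
      rcases G'.adj_sub hab with h | h
      · exact h
      · exfalso
        rw [fromEdgeSet_adj, Set.mem_singleton_iff, Sym2.eq, Sym2.rel_iff'] at h
        rcases h.1 with h1 | h1
        · have h1a : a = u := congrArg Prod.fst h1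
          have h1b : b = v := congrArg Prod.snd h1
          exact huv (h1a ▸ h1b ▸ hab)
        · have h1a : a = v := congrArg Prod.fst h1
          have h1b : b = u := congrArg Prod.snd h1
          exact huv (h1a ▸ h1b ▸ hab.symm)
    exact hsat.1 ⟨G'.verts, G'.Adj, fun {a b} h => hsub a b h,
      fun {a b} h => G'.edge_vert h, G'.symm⟩ ⟨e⟩

/-- A graph on ≥ 4 vertices with no diamond copy has a non-edge. -/
lemma exists_nonedge {V : Type*} [Fintype V] (G : SimpleGraph V)
    (hcard : 4 ≤ Fintype.card V) (hfree : ∀ G' : G.Subgraph, ¬ IsCopy diamond G') :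
    ∃ u v : V, u ≠ v ∧ ¬ G.Adj u v := by
  by_contra h
  push_neg at h
  obtain ⟨f⟩ := Function.Embedding.nonempty_of_card_le
    (by simpa using hcard : Fintype.card (Fin 4) ≤ Fintype.card V)
  set G' : G.Subgraph :=
    { verts := Set.range f
      Adj := fun a b => ∃ i j, diamond.Adj i j ∧ f i = a ∧ f j = b
      adj_sub := by
        rintro a b ⟨i, j, hij, rfl, rfl⟩
        exact h _ _ fun heq => hij.ne (f.injective heq)
      edge_vert := by rintro a b ⟨i, j, _, rfl, rfl⟩; exact ⟨i, rfl⟩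
      symm := ⟨by rintro a b ⟨i, j, hij, rfl, rfl⟩; exact ⟨j, i, hij.symm, rfl, rfl⟩⟩ }
  refine hfree G' ⟨⟨(Equiv.ofInjective f f.injective).symm, ?_⟩⟩
  intro x y
  set eqv := Equiv.ofInjective f f.injective with heqv
  constructor
  · intro hd
    refine ⟨eqv.symm x, eqv.symm y, hd, ?_, ?_⟩
    · exact congrArg Subtype.val (eqv.apply_symm_apply x)
    · exact congrArg Subtype.val (eqv.apply_symm_apply y)
  · rintro ⟨i, j, hij, hi, hj⟩
    have hx : eqv i = x := Subtype.ext hi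
    have hy : eqv j = y := Subtype.ext hj
    rw [← hx, ← hy, Equiv.symm_apply_apply, Equiv.symm_apply_apply]
    exact hij

theorem stmt0 {V : Type*} [Fintype V] (G : SimpleGraph V)
    (hcard : 4 ≤ Fintype.card V) (hsat : UniquelySaturated diamond G) :
    G.Connected ∧ G.diam = 2 := by
  have hNE : Nonempty V := Fintype.card_pos_iff.mp (by omega)
  obtain ⟨u0, v0, hne0, hnadj0⟩ := exists_nonedge G hcard hsat.1
  have key : ∀ u v : V, G.edist u v ≤ 2 := by
    intro u v
    by_cases h : u = v
    · simp [h]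
    by_cases hadj : G.Adj u v
    · rw [edist_eq_one_iff_adj.mpr hadj]; norm_num
    obtain ⟨w, h1, h2⟩ := common_nbr G hsat h hadj
    calc G.edist u v ≤ G.edist u w + G.edist w v := G.edist_triangle
      _ ≤ 1 + 1 := add_le_add (le_of_eq (edist_eq_one_iff_adj.mpr h1))
            (le_of_eq (edist_eq_one_iff_adj.mpr h2.symm))
      _ = 2 := by norm_num
  have hpre : G.Preconnected := by
    intro u v
    by_cases h : u = v
    · exact h ▸ Reachable.refl u
    by_cases hadj : G.Adj u v
    · exact hadj.reachable
    obtain ⟨w, h1, h2⟩ := common_nbr G hsat h hadj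
    exact h1.reachable.trans h2.reachable.symm
  have hconn : G.Connected := G.connected_iff.mpr ⟨hpre, hNE⟩
  refine ⟨hconn, ?_⟩
  have hge : 2 ≤ G.edist u0 v0 := by
    have h0 : G.edist u0 v0 ≠ 0 := by simp [edist_eq_zero_iff, hne0]
    have h1 : G.edist u0 v0 ≠ 1 := by simp [edist_eq_one_iff_adj, hnadj0]
    have hle := key u0 v0
    have hnt : G.edist u0 v0 ≠ ⊤ := fun h =>
      absurd (top_le_iff.mp (h ▸ hle)) (by decide)
    lift G.edist u0 v0 to ℕ using hnt with n hn
    have h0' : n ≠ 0 := by exact_mod_cast h0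
    have h1' : n ≠ 1 := by exact_mod_cast h1
    exact_mod_cast (by omega : (2:ℕ) ≤ n)
  have hediam : G.ediam = 2 := by
    apply le_antisymm (ediam_le_of_edist_le fun u v => key u v)
    exact hge.trans edist_le_ediam
  rw [SimpleGraph.diam, hediam]
  rfl
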